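/- arXiv:1909.08123 — 2 statements merged into one kernel-verified Lean document; each statement's English description precedes it below -/
import Mathlib

section
/- Let G ⊆ (𝔽₂)^{2n} be a pairwise anticommuting set. Then no nonempty proper subset H ⊂ G has sum equal to 0. -/
/-- The phase space `(𝔽₂)^{2n}`, modeled as pairs of vectors in `𝔽₂ⁿ`. -/
abbrev V (n : ℕ) := (Fin n → ZMod 2) × (Fin n → ZMod 2)

/-- The standard symplectic bilinear form `ω((a,b),(c,d)) = a·d + b·c`. -/
def sympl {n : ℕ} (P Q : V n) : ZMod 2 :=
  ∑ i, (P.1 i * Q.2 i + P.2 i * Q.1 i)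

/-- A finite set is (pairwise) anticommuting if `ω(P,Q) = 1` for all distinct `P, Q`. -/
def AC {n : ℕ} (G : Finset (V n)) : Prop :=
  ∀ P ∈ G, ∀ Q ∈ G, P ≠ Q → sympl P Q = 1

/-- A maximal pairwise anticommuting set: no strictly larger set is anticommuting. -/
def MaxAC {n : ℕ} (G : Finset (V n)) : Prop :=
  AC G ∧ ∀ H : Finset (V n), G ⊆ H → AC H → H = G

lemma sympl_self {n : ℕ} (P : V n) : sympl P P = 0 := by
  unfold sympl
  refine Finset.sum_eq_zero fun i _ => ?_
  rw [mul_comm (P.2 i)]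
  exact CharTwo.add_self_eq_zero _

lemma sympl_sum_left {n : ℕ} (H : Finset (V n)) (R : V n) :
    sympl (∑ x ∈ H, x) R = ∑ x ∈ H, sympl x R := by
  unfold sympl
  rw [Finset.sum_comm]
  refine Finset.sum_congr rfl fun i _ => ?_
  simp [Prod.fst_sum, Prod.snd_sum, Finset.sum_apply, Finset.sum_mul,
    Finset.sum_add_distrib]

lemma sympl_zero_left {n : ℕ} (R : V n) : sympl 0 R = 0 := by
  simp [sympl]

theorem stmt_8 {n : ℕ} (G : Finset (V n)) (hG : AC G) :
    ∀ H ⊆ G, H.Nonempty → H ≠ G → ∑ x ∈ H, x ≠ (0 : V n) := by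
  intro H hHG hne hneq hsum
  obtain ⟨Q, hQG, hQH⟩ : ∃ Q ∈ G, Q ∉ H := by
    by_contra h
    push_neg at h
    exact hneq (Finset.Subset.antisymm hHG h)
  obtain ⟨P0, hP0⟩ := hne
  have h1 : (H.card : ZMod 2) = 0 := by
    have := sympl_sum_left H Q
    rw [hsum, sympl_zero_left] at this
    rw [Finset.sum_congr rfl (fun x hx => hG x (hHG hx) Q hQG (fun h => hQH (h ▸ hx)))] at this
    simpa using this.symm
  have h2 : (H.card : ZMod 2) = 1 := by
    have := sympl_sum_left H P0
    rw [hsum, sympl_zero_left] at this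
    rw [← Finset.add_sum_erase H _ hP0, sympl_self] at this
    rw [Finset.sum_congr rfl (fun x hx => hG x (hHG (Finset.mem_of_mem_erase hx)) P0 (hHG hP0)
      (Finset.ne_of_mem_erase hx))] at this
    simp only [zero_add, Finset.sum_const, nsmul_eq_mul, mul_one] at this
    have hc : H.card = (H.erase P0).card + 1 := by
      rw [Finset.card_erase_of_mem hP0]
      have := Finset.card_pos.mpr ⟨P0, hP0⟩
      omega
    rw [hc]
    push_cast
    rw [← this, zero_add]
  rw [h1] at h2
  exact one_ne_zero h2.symm
end

section
/- Let G ⊆ (𝔽₂)^{2n} be a pairwise anticommuting set of size k ≥ 2 whose sum is 0. Then G spans a subgroup of order 2^{k−1}. -/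
lemma sympl_add_right {n : ℕ} (Q P R : V n) :
    sympl Q (P + R) = sympl Q P + sympl Q R := by
  unfold sympl
  rw [← Finset.sum_add_distrib]
  apply Finset.sum_congr rfl
  intro i _
  simp [Prod.fst_add, Prod.snd_add]
  ring

/-- `sympl Q ·` as an additive hom. -/
def symplHom {n : ℕ} (Q : V n) : V n →+ ZMod 2 :=
  AddMonoidHom.mk' (sympl Q) (sympl_add_right Q)

lemma sympl_sum {n : ℕ} (Q : V n) (S : Finset (V n)) :
    sympl Q (∑ P ∈ S, P) = ∑ P ∈ S, sympl Q P :=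
  map_sum (symplHom Q) id S

/-- Key lemma: the only subsets of `G` summing to zero are `∅` and `G`. -/
lemma subset_sum_zero {n : ℕ} {G S : Finset (V n)} (hG : AC G) (hS : S ⊆ G)
    (hz : ∑ x ∈ S, x = (0 : V n)) (hne : S ≠ G) : S = ∅ := by
  by_contra hSne
  obtain ⟨Q, hQ⟩ := Finset.nonempty_of_ne_empty hSne
  obtain ⟨R, hRG, hRS⟩ := Finset.exists_of_ssubset (hS.ssubset_of_ne hne)
  -- sum of sympl Q over S
  have hQsum : ∑ P ∈ S, sympl Q P = ((S.card - 1 : ℕ) : ZMod 2) := by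
    rw [← Finset.add_sum_erase _ _ hQ, sympl_self, zero_add]
    rw [Finset.sum_congr rfl (fun P hP => hG Q (hS hQ) P (hS (Finset.mem_of_mem_erase hP))
      (Ne.symm (Finset.ne_of_mem_erase hP)))]
    simp [Finset.card_erase_of_mem hQ]
  have hRsum : ∑ P ∈ S, sympl R P = ((S.card : ℕ) : ZMod 2) := by
    rw [Finset.sum_congr rfl (fun P hP => hG R hRG P (hS hP)
      (fun h => hRS (h ▸ hP)))]
    simp
  have h1 : ((S.card - 1 : ℕ) : ZMod 2) = 0 := by
    rw [← hQsum, ← sympl_sum, hz]; exact map_zero (symplHom Q)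
  have h2 : ((S.card : ℕ) : ZMod 2) = 0 := by
    rw [← hRsum, ← sympl_sum, hz]; exact map_zero (symplHom R)
  have hc : 1 ≤ S.card := Finset.card_pos.mpr ⟨Q, hQ⟩
  have : ((S.card : ℕ) : ZMod 2) = ((S.card - 1 : ℕ) : ZMod 2) + 1 := by
    conv_lhs => rw [show S.card = (S.card - 1) + 1 by omega]
    push_cast
    ring
  rw [h1, h2, zero_add] at this
  exact one_ne_zero this.symm

theorem stmt_10 {n : ℕ} (G : Finset (V n)) (hG : AC G) (hcard : 2 ≤ G.card)
    (hsum : ∑ x ∈ G, x = (0 : V n)) :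
    Nat.card (AddSubgroup.closure (G : Set (V n))) = 2 ^ (G.card - 1) := by
  obtain ⟨g₀, hg₀⟩ : G.Nonempty := Finset.card_pos.mp (by omega)
  set E := G.erase g₀ with hE
  -- the span of E equals the span of G
  have hg₀mem : g₀ ∈ Submodule.span (ZMod 2) (E : Set (V n)) := by
    have hs : g₀ + ∑ x ∈ E, x = 0 := by
      have h := Finset.add_sum_erase G (fun x => x) hg₀
      rw [hE, h, hsum]
    have : g₀ = -∑ x ∈ E, x := by linear_combination (norm := abel) hs
    rw [this]
    exact neg_mem (Submodule.sum_mem _ (fun x hx => Submodule.subset_span hx))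
  have hspan : Submodule.span (ZMod 2) ((G : Set (V n))) =
      Submodule.span (ZMod 2) ((E : Set (V n))) := by
    apply le_antisymm
    · rw [Submodule.span_le]
      intro x hx
      rcases eq_or_ne x g₀ with rfl | hxne
      · exact hg₀mem
      · exact Submodule.subset_span (Finset.mem_erase.mpr ⟨hxne, hx⟩)
    · exact Submodule.span_mono (fun x hx => Finset.mem_of_mem_erase hx)
  -- linear independence of E
  have hli : LinearIndependent (ZMod 2) ((↑) : E → V n) := by
    rw [Fintype.linearIndependent_iff]
    intro g hg x
    by_contra hgx
    have hcases : ∀ a : ZMod 2, a = 0 ∨ a = 1 := by decide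
    have hgx1 : g x = 1 := (hcases (g x)).resolve_left hgx
    set T' : Finset E := Finset.univ.filter (fun i => g i = 1) with hT'
    set T : Finset (V n) := T'.image Subtype.val with hT
    have hTsum : ∑ v ∈ T, v = (0 : V n) := by
      rw [hT, Finset.sum_image (by intro a _ b _ h; exact Subtype.ext h)]
      calc ∑ i ∈ T', (i : V n) = ∑ i ∈ T', g i • (i : V n) := by
            apply Finset.sum_congr rfl
            intro i hi
            rw [(Finset.mem_filter.mp hi).2, one_smul]
        _ = ∑ i : E, g i • (i : V n) := by
            rw [hT']
            apply Finset.sum_filter_of_ne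
            intro i _ hne
            rcases hcases (g i) with h0 | h1
            · exact absurd (by rw [h0, zero_smul]) hne
            · exact h1
        _ = 0 := hg
    have hTsubG : T ⊆ G := by
      intro v hv
      obtain ⟨i, _, rfl⟩ := Finset.mem_image.mp hv
      exact Finset.mem_of_mem_erase i.property
    have hTneG : T ≠ G := by
      intro h
      have hg₀T : g₀ ∈ T := h ▸ hg₀
      obtain ⟨i, _, hi⟩ := Finset.mem_image.mp hg₀T
      have : (i : V n) ∈ E := i.property
      exact (Finset.mem_erase.mp this).1 hi
    have hempty := subset_sum_zero hG hTsubG hTsum hTneG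
    have hxT : (x : V n) ∈ T :=
      Finset.mem_image.mpr ⟨x, Finset.mem_filter.mpr ⟨Finset.mem_univ _, hgx1⟩, rfl⟩
    rw [hempty] at hxT
    exact absurd hxT (Finset.notMem_empty _)
  -- finrank of the span
  have hfr : Module.finrank (ZMod 2) (Submodule.span (ZMod 2) ((E : Set (V n)))) = E.card := by
    exact finrank_span_finset_eq_card hli
  -- closure = span as add subgroups
  have hclosure : AddSubgroup.closure (G : Set (V n)) =
      (Submodule.span (ZMod 2) ((G : Set (V n)))).toAddSubgroup := by
    apply le_antisymm
    · exact AddSubgroup.closure_le _ |>.mpr Submodule.subset_span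
    · intro x hx
      have : Submodule.span (ZMod 2) ((G : Set (V n))) ≤
          AddSubgroup.toZModSubmodule 2 (AddSubgroup.closure (G : Set (V n))) :=
        Submodule.span_le.mpr (AddSubgroup.subset_closure)
      exact this hx
  rw [hclosure, hspan]
  haveI : Fintype (Submodule.span (ZMod 2) ((E : Set (V n)))) :=
    Fintype.ofFinite _
  have : Nat.card (Submodule.span (ZMod 2) ((E : Set (V n)))) = 2 ^ E.card := by
    rw [Nat.card_eq_fintype_card, Module.card_eq_pow_finrank (K := ZMod 2), hfr, ZMod.card]
  have hcardE : E.card = G.card - 1 := Finset.card_erase_of_mem hg₀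
  rw [← hcardE]
  exact this
end
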